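/- Let L be a finite-dimensional Lie algebra, M a maximal subalgebra, A a minimal ideal of L with L = M + A, and C = M ∩ A ≠ 0. If M + N_A(C) = L, where N_A(C) is the normalizer of C in A, then C is an ideal of L, hence C = A and L = M, a contradiction; therefore N_A(C) = C, i.e., C is self-normalizing in A. -/

import Mathlib

/-- `M` is a maximal (proper) subalgebra of `L`. -/
def IsMaximalSubalgebra {F : Type*} [Field F] {L : Type*} [LieRing L] [LieAlgebra F L]
    (M : LieSubalgebra F L) : Prop :=
  M ≠ ⊤ ∧ ∀ K : LieSubalgebra F L, M < K → K = ⊤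

/-- `C/D` is a chief factor of `L`: `D < C` are ideals of `L` and there is no ideal of `L`
strictly between them (equivalently, `C/D` is a minimal nonzero ideal of `L/D`). -/
def IsChiefFactor {F : Type*} [Field F] {L : Type*} [LieRing L] [LieAlgebra F L]
    (D C : LieIdeal F L) : Prop :=
  D < C ∧ ∀ K : LieIdeal F L, D ≤ K → K ≤ C → K = D ∨ K = C

/-- The subquotient `S/(S ∩ D)`, as a Lie algebra; when `D ⊆ S` this is `S/D`. -/
abbrev SubQuot {F : Type*} [Field F] {L : Type*} [LieRing L] [LieAlgebra F L]
    (S : LieSubalgebra F L) (D : LieIdeal F L) :=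
  S ⧸ LieIdeal.comap S.incl D

/-- The core `M_L` of a subalgebra `M`: the largest ideal of `L` contained in `M`. -/
def coreOf {F : Type*} [Field F] {L : Type*} [LieRing L] [LieAlgebra F L]
    (M : LieSubalgebra F L) : LieIdeal F L :=
  sSup {I : LieIdeal F L | (I : Set L) ⊆ M}

/-- Let `M` be maximal in `L`, `A` a minimal ideal with `L = M + A`, and
`C = M ∩ A ≠ 0`. Then `C` is self-normalizing in `A`: `N_A(C) = C`. -/
theorem normalizer_in_minimal_ideal_eq_self {F : Type*} [Field F] {L : Type*} [LieRing L]
    [LieAlgebra F L] [FiniteDimensional F L] (M : LieSubalgebra F L)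
    (hM : IsMaximalSubalgebra M) (A : LieIdeal F L) (hA : IsAtom A)
    (hsup : M.toSubmodule ⊔ A.toSubmodule = ⊤)
    (hC : ∃ x : L, x ∈ (M : Set L) ∩ (A : Set L) ∧ x ≠ 0) :
    {x : L | x ∈ A ∧ ∀ c ∈ (M : Set L) ∩ (A : Set L), ⁅x, c⁆ ∈ (M : Set L) ∩ (A : Set L)} =
      (M : Set L) ∩ (A : Set L) := by
  obtain ⟨hMne, hMmax⟩ := hM
  -- the normalizer set as a submodule
  let N : Submodule F L :=
    { carrier := {x : L | x ∈ A ∧ ∀ c ∈ (M : Set L) ∩ (A : Set L),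
        ⁅x, c⁆ ∈ (M : Set L) ∩ (A : Set L)}
      add_mem' := by
        rintro x y ⟨hxA, hx⟩ ⟨hyA, hy⟩
        refine ⟨A.toSubmodule.add_mem hxA hyA, fun c hc => ?_⟩
        rw [add_lie]
        exact ⟨M.add_mem (hx c hc).1 (hy c hc).1, A.toSubmodule.add_mem (hx c hc).2 (hy c hc).2⟩
      zero_mem' := ⟨A.toSubmodule.zero_mem, fun c hc => by
        rw [zero_lie]; exact ⟨M.zero_mem, A.toSubmodule.zero_mem⟩⟩
      smul_mem' := by
        rintro t x ⟨hxA, hx⟩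
        refine ⟨A.toSubmodule.smul_mem t hxA, fun c hc => ?_⟩
        rw [smul_lie]
        exact ⟨M.smul_mem t (hx c hc).1, A.toSubmodule.smul_mem t (hx c hc).2⟩ }
  have hNmem : ∀ {x : L}, x ∈ N ↔ (x ∈ A ∧ ∀ c ∈ (M : Set L) ∩ (A : Set L),
      ⁅x, c⁆ ∈ (M : Set L) ∩ (A : Set L)) := Iff.rfl
  -- M normalizes N
  have hMN : ∀ {m x : L}, m ∈ M → x ∈ N → ⁅m, x⁆ ∈ N := by
    rintro m x hm ⟨hxA, hx⟩
    refine hNmem.mpr ⟨A.lie_mem hxA, fun c hc => ?_⟩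
    rw [lie_lie]
    have h1 : ⁅m, ⁅x, c⁆⁆ ∈ (M : Set L) ∩ (A : Set L) := by
      have := hx c hc
      exact ⟨M.lie_mem hm this.1, A.lie_mem this.2⟩
    have h2 : ⁅x, ⁅m, c⁆⁆ ∈ (M : Set L) ∩ (A : Set L) :=
      hx _ ⟨M.lie_mem hm hc.1, A.lie_mem hc.2⟩
    exact ⟨M.sub_mem h1.1 h2.1, A.toSubmodule.sub_mem h1.2 h2.2⟩
  -- N is closed under bracket
  have hNN : ∀ {x y : L}, x ∈ N → y ∈ N → ⁅x, y⁆ ∈ N := by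
    rintro x y ⟨hxA, hx⟩ ⟨hyA, hy⟩
    refine hNmem.mpr ⟨A.lie_mem hyA, fun c hc => ?_⟩
    rw [lie_lie]
    have h1 : ⁅x, ⁅y, c⁆⁆ ∈ (M : Set L) ∩ (A : Set L) := hx _ (hy c hc)
    have h2 : ⁅y, ⁅x, c⁆⁆ ∈ (M : Set L) ∩ (A : Set L) := hy _ (hx c hc)
    exact ⟨M.sub_mem h1.1 h2.1, A.toSubmodule.sub_mem h1.2 h2.2⟩
  -- S = M + N is a subalgebra
  let S : LieSubalgebra F L :=
    { toSubmodule := M.toSubmodule ⊔ N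
      lie_mem' := by
        intro x y hx hy
        obtain ⟨mx, hmx, nx, hnx, rfl⟩ := Submodule.mem_sup.mp hx
        obtain ⟨my, hmy, ny, hny, rfl⟩ := Submodule.mem_sup.mp hy
        have e : ⁅mx + nx, my + ny⁆ = ⁅mx, my⁆ + ⁅mx, ny⁆ + (⁅nx, my⁆ + ⁅nx, ny⁆) := by
          rw [add_lie, lie_add, lie_add]
        show ⁅mx + nx, my + ny⁆ ∈ M.toSubmodule ⊔ N
        rw [e]
        have t1 : ⁅mx, my⁆ ∈ M.toSubmodule ⊔ N :=
          Submodule.mem_sup_left (M.lie_mem hmx hmy)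
        have t2 : ⁅mx, ny⁆ ∈ M.toSubmodule ⊔ N :=
          Submodule.mem_sup_right (hMN hmx hny)
        have t3 : ⁅nx, my⁆ ∈ M.toSubmodule ⊔ N := by
          have : ⁅nx, my⁆ = -⁅my, nx⁆ := (lie_skew nx my).symm
          rw [this]
          exact Submodule.mem_sup_right (N.neg_mem (hMN hmy hnx))
        have t4 : ⁅nx, ny⁆ ∈ M.toSubmodule ⊔ N :=
          Submodule.mem_sup_right (hNN hnx hny)
        exact add_mem (add_mem t1 t2) (add_mem t3 t4) }
  have hMleS : M ≤ S := fun x hx => Submodule.mem_sup_left hx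
  rcases hMleS.lt_or_eq with hlt | heq
  · exfalso
    have hStop : S = ⊤ := hMmax S hlt
    have htop : M.toSubmodule ⊔ N = ⊤ := by
      have := congrArg LieSubalgebra.toSubmodule hStop
      exact this
    -- C = M ∩ A is an ideal of L
    let I : LieIdeal F L :=
      { toSubmodule := M.toSubmodule ⊓ A.toSubmodule
        lie_mem := by
          intro x c hc
          have hc' : c ∈ (M : Set L) ∩ (A : Set L) := hc
          have hx : x ∈ M.toSubmodule ⊔ N := htop ▸ Submodule.mem_top
          obtain ⟨m, hm, n, hn, rfl⟩ := Submodule.mem_sup.mp hx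
          show ⁅m + n, c⁆ ∈ M.toSubmodule ⊓ A.toSubmodule
          rw [add_lie]
          have h1 : ⁅m, c⁆ ∈ M.toSubmodule ⊓ A.toSubmodule :=
            ⟨M.lie_mem hm hc'.1, A.lie_mem hc'.2⟩
          have h2 : ⁅n, c⁆ ∈ M.toSubmodule ⊓ A.toSubmodule := (hNmem.mp hn).2 c hc'
          exact add_mem h1 h2 }
    have hIA : I ≤ A := by
      intro x hx
      exact (hx : x ∈ M.toSubmodule ⊓ A.toSubmodule).2
    have hIne : I ≠ ⊥ := by
      obtain ⟨x, hx, hx0⟩ := hC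
      intro h
      have hxI : x ∈ I := (⟨hx.1, hx.2⟩ : x ∈ M.toSubmodule ⊓ A.toSubmodule)
      rw [h] at hxI
      exact hx0 ((LieSubmodule.mem_bot x).mp hxI)
    have hIAeq : I = A := by
      rcases lt_or_eq_of_le hIA with h | h
      · exact absurd (hA.2 I h) hIne
      · exact h
    have hAM : A.toSubmodule ≤ M.toSubmodule := by
      intro a ha
      have haI : a ∈ I := by rw [hIAeq]; exact ha
      exact (haI : a ∈ M.toSubmodule ⊓ A.toSubmodule).1
    have hMt : M.toSubmodule = ⊤ := by
      rw [← hsup, sup_eq_left.mpr hAM]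
    refine hMne (LieSubalgebra.ext _ _ fun x => ⟨fun _ => trivial, fun _ => ?_⟩)
    show x ∈ M.toSubmodule
    rw [hMt]; exact Submodule.mem_top
  · ext x
    constructor
    · rintro ⟨hxA, hx⟩
      have hxS : x ∈ S := Submodule.mem_sup_right (hNmem.mpr ⟨hxA, hx⟩)
      rw [← heq] at hxS
      exact ⟨hxS, hxA⟩
    · rintro ⟨hxM, hxA⟩
      exact ⟨hxA, fun c hc => ⟨M.lie_mem hxM hc.1, A.lie_mem hc.2⟩⟩
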